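/- Maximal ascent direction when x_e = 0 < 1 = y_e: Let (x^r, y^r) be an optimal solution to the decomposed Lagrangean subproblem z(λ^r) with x^r_e = 0 and y^r_e = 1. Define Δ = min{(λ^r)^T y : y ∈ F_kstab, y_e = 0} − (λ^r)^T y^r and ∂ = min{(w−λ^r)^T x : x ∈ F_sp.tree, x_e = 1} − (w−λ^r)^T x^r (both nonnegative, assuming the restricted minimization sets are nonempty). If m := min{Δ, ∂} > 0, then z(λ^r + m·𝔢_e) > z(λ^r), and (x^r, y^r) remains optimal at λ^r + m·𝔢_e but is not the unique optimal solution there. -/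

import Mathlib

open Finset

/-- Spanning-tree-side Lagrangean cost `(w − μ)ᵀ x`. -/
def cTree {m : ℕ} (w μ x : Fin m → ℚ) : ℚ := ∑ i, (w i - μ i) * x i

/-- Stable-set-side Lagrangean cost `μᵀ y`. -/
def cStab {m : ℕ} (μ y : Fin m → ℚ) : ℚ := ∑ i, μ i * y i

/-- The Lagrangean decomposition dual function. -/
def zDual {m : ℕ} (w : Fin m → ℚ) (Fst Fk : Finset (Fin m → ℚ))
    (hFst : Fst.Nonempty) (hFk : Fk.Nonempty) (μ : Fin m → ℚ) : ℚ :=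
  Fst.inf' hFst (cTree w μ) + Fk.inf' hFk (cStab μ)

set_option maxHeartbeats 2000000 in
/-- Maximal ascent direction when `x_e = 0 < 1 = y_e`
(Theorem 4.2 in the INOC version). -/
theorem stmt14 {m : ℕ} (w lam : Fin m → ℚ) (Fst Fk : Finset (Fin m → ℚ))
    (hFst : Fst.Nonempty) (hFk : Fk.Nonempty)
    (hFst01 : ∀ x ∈ Fst, ∀ i, x i = 0 ∨ x i = 1)
    (hFk01 : ∀ y ∈ Fk, ∀ i, y i = 0 ∨ y i = 1)
    (e : Fin m) (xr yr : Fin m → ℚ) (hxr : xr ∈ Fst) (hyr : yr ∈ Fk)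
    (hxopt : ∀ x ∈ Fst, cTree w lam xr ≤ cTree w lam x)
    (hyopt : ∀ y ∈ Fk, cStab lam yr ≤ cStab lam y)
    (hxe : xr e = 0) (hye : yr e = 1)
    (hK : (Fk.filter (fun y => y e = 0)).Nonempty)
    (hT : (Fst.filter (fun x => x e = 1)).Nonempty)
    (Δ δ : ℚ)
    (hΔ : Δ = (Fk.filter (fun y => y e = 0)).inf' hK (cStab lam) - cStab lam yr)
    (hδ : δ = (Fst.filter (fun x => x e = 1)).inf' hT (cTree w lam) -
      cTree w lam xr)
    (hpos : 0 < min Δ δ)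
    (lam' : Fin m → ℚ)
    (hlam' : lam' = lam + min Δ δ • (Pi.single e 1 : Fin m → ℚ)) :
    zDual w Fst Fk hFst hFk lam < zDual w Fst Fk hFst hFk lam' ∧
    (∀ x ∈ Fst, cTree w lam' xr ≤ cTree w lam' x) ∧
    (∀ y ∈ Fk, cStab lam' yr ≤ cStab lam' y) ∧
    (∃ x' ∈ Fst, ∃ y' ∈ Fk, (x', y') ≠ (xr, yr) ∧
      (∀ x ∈ Fst, cTree w lam' x' ≤ cTree w lam' x) ∧
      (∀ y ∈ Fk, cStab lam' y' ≤ cStab lam' y)) := by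

  set t : ℚ := min Δ δ with htdef
  have htΔ : t ≤ Δ := min_le_left _ _
  have htδ : t ≤ δ := min_le_right _ _
  have hct : ∀ x : Fin m → ℚ, cTree w lam' x = cTree w lam x - t * x e := by
    intro x
    have h1 : ∀ i, (w i - lam' i) * x i
        = (w i - lam i) * x i - (if i = e then t * x i else 0) := by
      intro i
      by_cases h : i = e
      · subst h; simp [hlam', Pi.single_apply]; ring
      · simp [hlam', Pi.single_apply, h]
    simp only [cTree, h1, Finset.sum_sub_distrib]
    congr 1
    simp
  have hcs : ∀ y : Fin m → ℚ, cStab lam' y = cStab lam y + t * y e := by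
    intro y
    have h1 : ∀ i, lam' i * y i
        = lam i * y i + (if i = e then t * y i else 0) := by
      intro i
      by_cases h : i = e
      · subst h; simp [hlam', Pi.single_apply]; ring
      · simp [hlam', Pi.single_apply, h]
    simp only [cStab, h1, Finset.sum_add_distrib]
    congr 1
    simp
  have hinfΔ : (Fk.filter (fun y => y e = 0)).inf' hK (cStab lam)
      = cStab lam yr + Δ := by rw [hΔ]; ring
  have hinfδ : (Fst.filter (fun x => x e = 1)).inf' hT (cTree w lam)
      = cTree w lam xr + δ := by rw [hδ]; ring
  have h2 : ∀ x ∈ Fst, cTree w lam' xr ≤ cTree w lam' x := by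
    intro x hx
    rw [hct, hct, hxe, mul_zero, sub_zero]
    rcases hFst01 x hx e with h0 | h1
    · rw [h0, mul_zero, sub_zero]; exact hxopt x hx
    · have hinf : (Fst.filter (fun x => x e = 1)).inf' hT (cTree w lam)
          ≤ cTree w lam x := Finset.inf'_le _ (Finset.mem_filter.2 ⟨hx, h1⟩)
      rw [h1, mul_one]
      rw [hinfδ] at hinf
      linarith
  have h3 : ∀ y ∈ Fk, cStab lam' yr ≤ cStab lam' y := by
    intro y hy
    rw [hcs, hcs, hye, mul_one]
    rcases hFk01 y hy e with h0 | h1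
    · have hinf : (Fk.filter (fun y => y e = 0)).inf' hK (cStab lam)
          ≤ cStab lam y := Finset.inf'_le _ (Finset.mem_filter.2 ⟨hy, h0⟩)
      rw [h0, mul_zero, add_zero]
      rw [hinfΔ] at hinf
      linarith
    · rw [h1, mul_one]; linarith [hyopt y hy]
  have hzl : zDual w Fst Fk hFst hFk lam = cTree w lam xr + cStab lam yr := by
    unfold zDual
    congr 1
    · exact le_antisymm (Finset.inf'_le _ hxr) (Finset.le_inf' _ _ hxopt)
    · exact le_antisymm (Finset.inf'_le _ hyr) (Finset.le_inf' _ _ hyopt)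
  have hzl' : zDual w Fst Fk hFst hFk lam'
      = cTree w lam' xr + cStab lam' yr := by
    unfold zDual
    congr 1
    · exact le_antisymm (Finset.inf'_le _ hxr) (Finset.le_inf' _ _ h2)
    · exact le_antisymm (Finset.inf'_le _ hyr) (Finset.le_inf' _ _ h3)
  refine ⟨?_, h2, h3, ?_⟩
  · rw [hzl, hzl', hct, hcs, hxe, hye, mul_zero, mul_one, sub_zero]
    linarith
  · rcases le_or_gt Δ δ with hc | hc
    · have htt : t = Δ := min_eq_left hc
      obtain ⟨y', hy'mem, hy'eq⟩ := Finset.exists_mem_eq_inf' hK (cStab lam)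
      have hy'F : y' ∈ Fk := (Finset.mem_filter.1 hy'mem).1
      have hy'e : y' e = 0 := (Finset.mem_filter.1 hy'mem).2
      have hval : cStab lam y' = cStab lam yr + Δ := by rw [← hy'eq, hinfΔ]
      refine ⟨xr, hxr, y', hy'F, ?_, h2, ?_⟩
      · intro h
        have h' : y' = yr := congrArg Prod.snd h
        rw [h', hye] at hy'e
        norm_num at hy'e
      · intro y hy
        have := h3 y hy
        have heq : cStab lam' y' = cStab lam' yr := by
          rw [hcs, hcs, hy'e, hye, mul_zero, mul_one, add_zero, hval, htt]
        linarith
    · have htt : t = δ := min_eq_right hc.le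
      obtain ⟨x', hx'mem, hx'eq⟩ := Finset.exists_mem_eq_inf' hT (cTree w lam)
      have hx'F : x' ∈ Fst := (Finset.mem_filter.1 hx'mem).1
      have hx'e : x' e = 1 := (Finset.mem_filter.1 hx'mem).2
      have hval : cTree w lam x' = cTree w lam xr + δ := by rw [← hx'eq, hinfδ]
      refine ⟨x', hx'F, yr, hyr, ?_, ?_, h3⟩
      · intro h
        have h' : x' = xr := congrArg Prod.fst h
        rw [h', hxe] at hx'e
        norm_num at hx'e
      · intro x hx
        have := h2 x hx
        have heq : cTree w lam' x' = cTree w lam' xr := by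
          rw [hct, hct, hx'e, hxe, mul_zero, mul_one, sub_zero, hval, htt]
          ring
        linarith
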